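/- Let f : N → M be a homomorphism of finitely generated modules over a Noetherian local ring R that is an isomorphism after localizing at every prime ideal other than the maximal ideal. If depth_R(N) ≥ 2 and depth_R(M) ≥ 1, then f is an isomorphism. -/

import Mathlib

open Pointwise

/-- `depthGE R M n` : the depth of the module `M` over the local ring `R` is at least `n`. -/
def depthGE (R : Type*) [CommRing R] [IsLocalRing R]
    (M : Type*) [AddCommGroup M] [Module R M] (n : ℕ) : Prop :=
  ∃ rs : List R, rs.length = n ∧ (∀ r ∈ rs, r ∈ IsLocalRing.maximalIdeal R) ∧
    RingTheory.Sequence.IsWeaklyRegular M rs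

/-- A homomorphism `f : N → M` of finitely generated modules over a Noetherian local ring
that is an isomorphism after localization at every prime ideal other than the maximal
ideal is an isomorphism, provided `depth N ≥ 2` and `depth M ≥ 1`. -/
theorem bijective_of_localized_bijective_of_depth
    {R : Type*} [CommRing R] [IsNoetherianRing R] [IsLocalRing R]
    {N M : Type*} [AddCommGroup N] [Module R N] [Module.Finite R N]
    [AddCommGroup M] [Module R M] [Module.Finite R M]
    (f : N →ₗ[R] M)
    (hloc : ∀ (p : Ideal R) [p.IsPrime], p ≠ IsLocalRing.maximalIdeal R →
      Function.Bijective
        (IsLocalizedModule.map p.primeCompl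
          (LocalizedModule.mkLinearMap p.primeCompl N)
          (LocalizedModule.mkLinearMap p.primeCompl M) f))
    (hN : depthGE R N 2) (hM : depthGE R M 1) :
    Function.Bijective f := by
  classical
  obtain ⟨rsN, hlenN, hmemN, hregN⟩ := hN
  obtain ⟨r, s, rfl⟩ : ∃ r s, rsN = [r, s] := by
    match rsN, hlenN with
    | [r, s], _ => exact ⟨r, s, rfl⟩
  obtain ⟨rsM, hlenM, hmemM, hregM⟩ := hM
  obtain ⟨x, rfl⟩ : ∃ x, rsM = [x] := by
    match rsM, hlenM with
    | [x], _ => exact ⟨x, rfl⟩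
  have hrm : r ∈ IsLocalRing.maximalIdeal R := hmemN r (by simp)
  have hsm : s ∈ IsLocalRing.maximalIdeal R := hmemN s (by simp)
  have hxm : x ∈ IsLocalRing.maximalIdeal R := hmemM x (by simp)
  rw [RingTheory.Sequence.isWeaklyRegular_cons_iff] at hregN
  obtain ⟨hr, hregN2⟩ := hregN
  rw [RingTheory.Sequence.isWeaklyRegular_cons_iff] at hregN2
  obtain ⟨hs, -⟩ := hregN2
  rw [RingTheory.Sequence.isWeaklyRegular_cons_iff] at hregM
  obtain ⟨hx, -⟩ := hregM
  -- Injectivity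
  have hinj : Function.Injective f := by
    rw [← LinearMap.ker_eq_bot]
    by_contra hker
    haveI : Nontrivial (LinearMap.ker f) := Submodule.nontrivial_iff_ne_bot.mpr hker
    obtain ⟨p, hp⟩ := associatedPrimes.nonempty R (LinearMap.ker f)
    obtain ⟨hp, k, hk⟩ := isAssociatedPrime_iff.mp hp
    have hk0 : k ≠ 0 := by
      rintro rfl
      exact hp.ne_top (by
        rw [hk, Submodule.colon_singleton_zero])
    have hk' : ∀ y : R, y ∈ p ↔ y • k = 0 := by
      intro y
      rw [hk]
      rw [Submodule.mem_colon_singleton, Submodule.mem_bot]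
    by_cases hpm : p = IsLocalRing.maximalIdeal R
    · have hrk : r • k = 0 := (hk' r).mp (hpm ▸ hrm)
      have : r • (k : N) = r • (0 : N) := by
        rw [smul_zero, ← Submodule.coe_smul, hrk, Submodule.coe_zero]
      exact hk0 (Subtype.ext (hr this))
    · have hb := hloc p hpm
      have hfk : f (k : N) = 0 := k.2
      have h1 : (IsLocalizedModule.map p.primeCompl
          (LocalizedModule.mkLinearMap p.primeCompl N)
          (LocalizedModule.mkLinearMap p.primeCompl M) f)
          (LocalizedModule.mk (k : N) 1) = LocalizedModule.mk (0 : M) 1 := by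
        rw [IsLocalizedModule.map_LocalizedModules, hfk]
      have h2 : (IsLocalizedModule.map p.primeCompl
          (LocalizedModule.mkLinearMap p.primeCompl N)
          (LocalizedModule.mkLinearMap p.primeCompl M) f)
          (LocalizedModule.mk (0 : N) 1) = LocalizedModule.mk (0 : M) 1 := by
        rw [IsLocalizedModule.map_LocalizedModules, map_zero]
      have h3 : LocalizedModule.mk (k : N) 1 = LocalizedModule.mk (0 : N) 1 :=
        hb.1 (h1.trans h2.symm)
      obtain ⟨u, hu⟩ := LocalizedModule.mk_eq.mp h3
      simp only [one_smul, smul_zero] at hu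
      have hup : (u : R) ∈ p := by
        refine (hk' (u : R)).mpr (Subtype.ext ?_)
        rw [Submodule.coe_smul, Submodule.coe_zero]
        simpa [Submonoid.smul_def] using hu
      exact u.2 hup
  -- Surjectivity
  have hsurj : Function.Surjective f := by
    rw [← LinearMap.range_eq_top]
    by_contra hrange
    haveI : Nontrivial (M ⧸ LinearMap.range f) :=
      Submodule.Quotient.nontrivial_iff.mpr hrange
    obtain ⟨p, hp⟩ := associatedPrimes.nonempty R (M ⧸ LinearMap.range f)
    obtain ⟨hp, c, hc⟩ := isAssociatedPrime_iff.mp hp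
    have hc0 : c ≠ 0 := by
      rintro rfl
      exact hp.ne_top (by
        rw [hc, Submodule.colon_singleton_zero])
    obtain ⟨m0, rfl⟩ := Submodule.Quotient.mk_surjective _ c
    have hc' : ∀ y : R,
        y ∈ p ↔ y • (Submodule.Quotient.mk m0 : M ⧸ LinearMap.range f) = 0 := by
      intro y
      rw [hc]
      rw [Submodule.mem_colon_singleton, Submodule.mem_bot]
    by_cases hpm : p = IsLocalRing.maximalIdeal R
    · -- the depth argument
      have hann : ∀ y ∈ IsLocalRing.maximalIdeal R, ∃ n, f n = y • m0 := by
        intro y hy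
        have h0 : (Submodule.Quotient.mk (y • m0) : M ⧸ LinearMap.range f) = 0 := by
          rw [Submodule.Quotient.mk_smul]
          exact (hc' y).mp (hpm ▸ hy)
        obtain ⟨n, hn⟩ := (Submodule.Quotient.mk_eq_zero _).mp h0
        exact ⟨n, hn⟩
      obtain ⟨nr, hnr⟩ := hann r hrm
      obtain ⟨ns, hns⟩ := hann s hsm
      obtain ⟨n1, hn1⟩ := hann x hxm
      have h1 : s • nr = r • ns := hinj (by
        rw [map_smul, map_smul, hnr, hns, smul_smul, smul_smul, mul_comm])
      have h2 : nr ∈ r • (⊤ : Submodule R N) := by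
        have hq : s • (Submodule.Quotient.mk nr : QuotSMulTop r N)
            = s • (0 : QuotSMulTop r N) := by
          rw [smul_zero, ← Submodule.Quotient.mk_smul, h1,
            Submodule.Quotient.mk_eq_zero]
          exact Submodule.smul_mem_pointwise_smul ns r ⊤ trivial
        have := hs hq
        rwa [Submodule.Quotient.mk_eq_zero] at this
      rw [← SetLike.mem_coe, Submodule.coe_pointwise_smul] at h2
      obtain ⟨n', -, hn'⟩ := Set.mem_smul_set.mp h2
      have h3 : r • (m0 - f n') = 0 := by
        rw [smul_sub, ← map_smul, hn', hnr, sub_self]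
      have h4 : f (n1 - x • n') = x • (m0 - f n') := by
        rw [map_sub, hn1, map_smul, smul_sub]
      have h5 : f (r • (n1 - x • n')) = 0 := by
        rw [map_smul, h4, smul_comm, h3, smul_zero]
      have h7 : n1 - x • n' = 0 := hr (show r • (n1 - x • n') = r • (0 : N) by
        rw [smul_zero]
        exact hinj (by rw [h5, map_zero]))
      have h9 : m0 - f n' = 0 := hx (show x • (m0 - f n') = x • (0 : M) by
        rw [smul_zero, ← h4, h7, map_zero])
      apply hc0
      rw [show m0 = f n' from sub_eq_zero.mp h9]
      exact (Submodule.Quotient.mk_eq_zero _).mpr ⟨n', rfl⟩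
    · have hb := hloc p hpm
      obtain ⟨z, hz⟩ := hb.2 (LocalizedModule.mk m0 1)
      obtain ⟨n, t, rfl⟩ : ∃ n t, z = LocalizedModule.mk n t := by
        induction z using LocalizedModule.induction_on with
        | h a b => exact ⟨a, b, rfl⟩
      rw [IsLocalizedModule.map_LocalizedModules] at hz
      obtain ⟨u, hu⟩ := LocalizedModule.mk_eq.mp hz
      have hu' : (u : R) • f n = (u : R) • (t : R) • m0 := by
        simpa [Submonoid.smul_def] using hu
      have hmem : ((u : R) * (t : R)) • m0 ∈ LinearMap.range f := by
        refine ⟨(u : R) • n, ?_⟩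
        rw [map_smul, hu', mul_smul]
      have hup : ((u : R) * (t : R)) ∈ p := by
        refine (hc' _).mpr ?_
        rw [← Submodule.Quotient.mk_smul, Submodule.Quotient.mk_eq_zero]
        exact hmem
      rcases hp.mem_or_mem hup with h | h
      · exact u.2 h
      · exact t.2 h
  exact ⟨hinj, hsurj⟩
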